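/- arXiv:2206.09159 — 2 statements merged into one kernel-verified Lean document; each statement's English description precedes it below -/
import Mathlib

section
/- (Lemma 3, safe node consensus.) Assume n >= 2f+1 and the set D of dishonest players has exactly f elements. Let ζ be a route of depth d (1 ≤ d ≤ f) whose primary is honest and whose first d−1 entries are all dishonest (a safe node: the primary is the first honest player appearing on the route). Then for every adversary assignment (w, u) satisfying (A1)-(A4) and every honest backup i of ζ, the gathering value satisfies g(ζ, i) = w(ζ, i); in particular all honest backups of ζ reach consensus on the common multicast value of ζ's honest primary. -/
namespace QBA

/-- The majority function: returns the element of `M` occurring most often in `L`,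
with ties broken by taking the least such element in the linear order,
and returning the default `d` on the empty list. -/
def maj {M : Type*} [LinearOrder M] (d : M) (L : List M) : M :=
  let s := L.toFinset.filter fun m => ∀ m' ∈ L.toFinset, L.count m' ≤ L.count m
  if h : s.Nonempty then s.min' h else d

/-- A route: a list of pairwise distinct players with head `S`
and length (depth) between `1` and `f`.  Its primary is its last entry,
and its backups are the players not occurring in it. -/
def IsRoute (n f : ℕ) (S : Fin n) (ζ : List (Fin n)) : Prop :=
  ζ.Nodup ∧ ζ.head? = some S ∧ 1 ≤ ζ.length ∧ ζ.length ≤ f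

/-- The primary (last entry) of `ζ` is honest (not in `D`). -/
def HonestPrimary {n : ℕ} (D : Finset (Fin n)) (ζ : List (Fin n)) : Prop :=
  ∀ q ∈ ζ.getLast?, q ∉ D

/-- An adversary assignment `(w, u)`: `w ζ i` is the message backup `i` accepts from
`ζ`'s primary, `u ζ j i` the message forwarder `j` forwards to verifier `i`,
subject to conditions (A1)–(A4). -/
structure Adversary (n f : ℕ) (S : Fin n) (D : Finset (Fin n)) (M : Type*) where
  w : List (Fin n) → Fin n → M
  u : List (Fin n) → Fin n → Fin n → M
  A1 : ∀ ζ : List (Fin n), IsRoute n f S ζ → HonestPrimary D ζ →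
    ∀ i i' : Fin n, i ∉ ζ → i' ∉ ζ → w ζ i = w ζ i'
  A2 : ∀ (ζ : List (Fin n)) (p : Fin n), IsRoute n f S ζ → p ∉ ζ → p ∉ D →
    IsRoute n f S (ζ ++ [p]) → ∀ i : Fin n, i ∉ ζ ++ [p] → w (ζ ++ [p]) i = w ζ p
  A3 : ∀ (ζ : List (Fin n)) (p : Fin n), IsRoute n f S ζ → HonestPrimary D ζ →
    p ∉ ζ → p ∈ D → IsRoute n f S (ζ ++ [p]) →
    ∀ i : Fin n, i ∉ ζ ++ [p] → i ∉ D → w (ζ ++ [p]) i = w ζ p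
  A4 : ∀ (ζ : List (Fin n)) (j i : Fin n), IsRoute n f S ζ → j ∉ ζ → i ∉ ζ → i ≠ j →
    (j ∉ D ∨ HonestPrimary D ζ) → u ζ j i = w ζ j

/-- Fuel-indexed gathering value; for a route `ζ` the fuel is `f - ζ.length`, so fuel `0`
corresponds to the bottom layer `ζ.length = f`. -/
def gAux {n f : ℕ} {S : Fin n} {D : Finset (Fin n)} {M : Type*} [LinearOrder M] [Inhabited M]
    (A : Adversary n f S D M) : ℕ → List (Fin n) → Fin n → M
  | 0, ζ, i =>
      maj default (A.w ζ i ::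
        (((List.finRange n).filter fun j => decide (j ∉ ζ ∧ j ≠ i)).map fun j => A.u ζ j i))
  | k + 1, ζ, i =>
      maj default (((List.finRange n).filter fun j => decide (j ∉ ζ)).map
        fun j => if j = i then A.w ζ i else gAux A k (ζ ++ [j]) i)

/-- The gathering value `g(ζ, i)` of an honest backup `i` of the route `ζ`,
defined by downward recursion on depth: at the bottom layer `ζ.length = f` it is the
majority of `w(ζ, i)` together with `u(ζ, j, i)` over all backups `j ≠ i` of `ζ`;
above the bottom layer it is the majority, over all backups `j` of `ζ`, of
`g(ζ ++ [j], i)` (where the `j = i` entry is `w(ζ, i)`). -/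
def g {n f : ℕ} {S : Fin n} {D : Finset (Fin n)} {M : Type*} [LinearOrder M] [Inhabited M]
    (A : Adversary n f S D M) (ζ : List (Fin n)) (i : Fin n) : M :=
  gAux A (f - ζ.length) ζ i

/-! ### Auxiliary lemmas for Lemma 3 -/

section Aux

lemma two_count_le {M : Type*} [DecidableEq M] {L : List M} {a b : M} (hab : a ≠ b) :
    L.count a + L.count b ≤ L.length := by
  have h1 : L.count a ≤ L.countP (fun x => decide ¬((x == b) = true)) := by
    rw [List.count_eq_countP]
    refine List.countP_mono_left ?_
    intro x _ hx
    simp only [beq_iff_eq] at hx ⊢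
    simp [hx, hab]
  have h2 := List.length_eq_countP_add_countP (fun x => x == b) (l := L)
  rw [List.count_eq_countP (a := b)]
  omega

lemma maj_eq_of_majority {M : Type*} [LinearOrder M] (d v : M) (L : List M)
    (h : L.length < 2 * L.count v) : maj d L = v := by
  classical
  have hv : v ∈ L := by
    by_contra hv
    rw [List.count_eq_zero_of_not_mem hv] at h
    omega
  have hvs : v ∈ L.toFinset.filter fun m => ∀ m' ∈ L.toFinset, L.count m' ≤ L.count m := by
    refine Finset.mem_filter.mpr ⟨List.mem_toFinset.mpr hv, ?_⟩
    intro m' _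
    by_cases hm : m' = v
    · simp [hm]
    · have := two_count_le (L := L) hm
      omega
  have hne : (L.toFinset.filter fun m => ∀ m' ∈ L.toFinset, L.count m' ≤ L.count m).Nonempty :=
    ⟨v, hvs⟩
  have hall : ∀ m ∈ L.toFinset.filter fun m => ∀ m' ∈ L.toFinset, L.count m' ≤ L.count m,
      m = v := by
    intro m hm
    rcases Finset.mem_filter.mp hm with ⟨hm1, hm2⟩
    by_contra hmv
    have h1 := hm2 v (List.mem_toFinset.mpr hv)
    have h2 := two_count_le (L := L) hmv
    omega
  simp only [maj]
  rw [dif_pos hne]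
  exact hall _ (Finset.min'_mem _ hne)

lemma length_filter_finRange {n : ℕ} (p : Fin n → Prop) [DecidablePred p] :
    ((List.finRange n).filter (fun j => decide (p j))).length
      = (Finset.univ.filter p).card := by
  rw [← List.toFinset_card_of_nodup ((List.nodup_finRange n).filter _)]
  congr 1
  ext j
  simp [List.mem_filter]

lemma count_map_finRange {n : ℕ} {M : Type*} [DecidableEq M] (p : Fin n → Prop)
    [DecidablePred p] (F : Fin n → M) (v : M) :
    ((((List.finRange n).filter fun j => decide (p j)).map F).count v)
      = (Finset.univ.filter fun j => p j ∧ F j = v).card := by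
  rw [List.count_eq_countP, List.countP_map, List.countP_eq_length_filter,
    List.filter_filter]
  rw [← List.toFinset_card_of_nodup ((List.nodup_finRange n).filter _)]
  congr 1
  ext j
  simp [List.mem_filter, Function.comp, and_comm]

variable {n f : ℕ} {S : Fin n} {D : Finset (Fin n)}

lemma route_extend {ζ : List (Fin n)} {j : Fin n} (hζ : IsRoute n f S ζ)
    (hlen : ζ.length < f) (hj : j ∉ ζ) : IsRoute n f S (ζ ++ [j]) := by
  obtain ⟨h1, h2, h3, h4⟩ := hζ
  refine ⟨?_, ?_, ?_, ?_⟩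
  · simp only [List.nodup_append, List.nodup_singleton, true_and]
    exact ⟨h1, by intro a ha b hb h; simp at hb; subst hb; subst h; exact hj ha⟩
  · cases ζ with
    | nil => simp at h3
    | cons a t => simpa using h2
  · simp only [List.length_append, List.length_singleton]; omega
  · simp only [List.length_append, List.length_singleton]; omega

lemma honest_primary_concat {ζ : List (Fin n)} {j : Fin n} (hj : j ∉ D) :
    HonestPrimary D (ζ ++ [j]) := by
  intro q hq
  rw [List.getLast?_concat] at hq
  simp only [Option.mem_def, Option.some.injEq] at hq
  exact hq ▸ hj

lemma hcard_succ_mem {ζ : List (Fin n)} {j : Fin n} (hjD : j ∈ D) (hjζ : j ∉ ζ) :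
    (D.filter (· ∈ ζ ++ [j])).card = (D.filter (· ∈ ζ)).card + 1 := by
  have h : D.filter (· ∈ ζ ++ [j]) = insert j (D.filter (· ∈ ζ)) := by
    ext x
    simp only [Finset.mem_filter, Finset.mem_insert, List.mem_append, List.mem_singleton]
    constructor
    · rintro ⟨hx, hx2 | rfl⟩
      · exact Or.inr ⟨hx, hx2⟩
      · exact Or.inl rfl
    · rintro (rfl | ⟨hx, hx2⟩)
      · exact ⟨hjD, Or.inr rfl⟩
      · exact ⟨hx, Or.inl hx2⟩
  rw [h, Finset.card_insert_of_notMem (by simp [hjζ])]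

lemma hcard_succ_not {ζ : List (Fin n)} {j : Fin n} (hjD : j ∉ D) :
    D.filter (· ∈ ζ ++ [j]) = D.filter (· ∈ ζ) := by
  apply Finset.filter_congr
  intro x hx
  simp only [List.mem_append, List.mem_singleton]
  constructor
  · rintro (h | rfl)
    · exact h
    · exact absurd hx hjD
  · exact Or.inl

lemma card_partition (p q : Fin n → Prop) [DecidablePred p] [DecidablePred q] :
    (Finset.univ.filter fun j => p j ∧ q j).card
      + (Finset.univ.filter fun j => p j ∧ ¬ q j).card
      = (Finset.univ.filter p).card := by
  classical
  rw [← Finset.filter_filter, ← Finset.filter_filter,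
    Finset.card_filter_add_card_filter_not]

lemma card_backups {ζ : List (Fin n)} (hnd : ζ.Nodup) :
    (Finset.univ.filter fun j => j ∉ ζ).card + ζ.length = n := by
  classical
  have h1 : (Finset.univ.filter fun j => (j : Fin n) ∈ ζ).card = ζ.length := by
    rw [show (Finset.univ.filter fun j => (j : Fin n) ∈ ζ) = ζ.toFinset from by ext x; simp]
    exact List.toFinset_card_of_nodup hnd
  have h2 := Finset.card_filter_add_card_filter_not
    (s := (Finset.univ : Finset (Fin n))) (p := fun j => j ∈ ζ)
  simp only [Finset.card_univ, Fintype.card_fin] at h2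
  omega

lemma card_dishonest_backups {ζ : List (Fin n)} :
    (Finset.univ.filter fun j => j ∉ ζ ∧ j ∈ D).card + (D.filter (· ∈ ζ)).card = D.card := by
  classical
  have h1 : (Finset.univ.filter fun j => j ∉ ζ ∧ j ∈ D) = D.filter (· ∉ ζ) := by
    ext x; simp [and_comm]
  have h2 := Finset.card_filter_add_card_filter_not
    (s := D) (p := fun j => j ∈ ζ)
  rw [h1]
  omega

lemma card_split_D {ζ : List (Fin n)} :
    (Finset.univ.filter fun j => j ∉ ζ ∧ j ∈ D).card
      + (Finset.univ.filter fun j => j ∉ ζ ∧ j ∉ D).card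
      = (Finset.univ.filter fun j => j ∉ ζ).card := by
  classical
  exact card_partition (fun j => j ∉ ζ) (fun j => j ∈ D)

lemma card_erase_i {ζ : List (Fin n)} {i : Fin n} (hi : i ∉ ζ) :
    (Finset.univ.filter fun j => j ∉ ζ ∧ j ≠ i).card + 1
      = (Finset.univ.filter fun j => j ∉ ζ).card := by
  classical
  have h := card_partition (fun j : Fin n => j ∉ ζ) (fun j => j ≠ i)
  have h2 : (Finset.univ.filter fun j : Fin n => j ∉ ζ ∧ ¬ j ≠ i) = {i} := by
    ext x
    simp only [Finset.mem_filter, Finset.mem_univ, true_and, not_not, Finset.mem_singleton]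
    constructor
    · rintro ⟨_, rfl⟩; rfl
    · rintro rfl; exact ⟨hi, rfl⟩
  rw [h2] at h
  simpa using h

lemma card_erase_i' {ζ : List (Fin n)} {i : Fin n} (hi : i ∉ ζ) (hiD : i ∉ D) :
    (Finset.univ.filter fun j => (j ∉ ζ ∧ j ≠ i) ∧ j ∉ D).card + 1
      = (Finset.univ.filter fun j => j ∉ ζ ∧ j ∉ D).card := by
  classical
  have h := card_partition (fun j : Fin n => j ∉ ζ ∧ j ∉ D) (fun j => j ≠ i)
  have h2 : (Finset.univ.filter fun j : Fin n => (j ∉ ζ ∧ j ∉ D) ∧ ¬ j ≠ i) = {i} := by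
    ext x
    simp only [Finset.mem_filter, Finset.mem_univ, true_and, not_not, Finset.mem_singleton]
    constructor
    · rintro ⟨_, rfl⟩; rfl
    · rintro rfl; exact ⟨⟨hi, hiD⟩, rfl⟩
  have h3 : (Finset.univ.filter fun j : Fin n => (j ∉ ζ ∧ j ∉ D) ∧ j ≠ i)
      = (Finset.univ.filter fun j => (j ∉ ζ ∧ j ≠ i) ∧ j ∉ D) := by
    ext x
    simp only [Finset.mem_filter, Finset.mem_univ, true_and]
    tauto
  rw [h2, h3] at h
  simpa using h

lemma card_insert_i {ζ : List (Fin n)} {i : Fin n} (hi : i ∉ ζ) (hiD : i ∉ D) :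
    (Finset.univ.filter fun j => j ∉ ζ ∧ (j = i ∨ j ∈ D)).card
      = (Finset.univ.filter fun j => j ∉ ζ ∧ j ∈ D).card + 1 := by
  classical
  have h : (Finset.univ.filter fun j : Fin n => j ∉ ζ ∧ (j = i ∨ j ∈ D))
      = insert i (Finset.univ.filter fun j => j ∉ ζ ∧ j ∈ D) := by
    ext x
    simp only [Finset.mem_filter, Finset.mem_univ, true_and, Finset.mem_insert]
    constructor
    · rintro ⟨hx, rfl | hx2⟩
      · exact Or.inl rfl
      · exact Or.inr ⟨hx, hx2⟩
    · rintro (rfl | ⟨hx, hx2⟩)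
      · exact ⟨hi, Or.inl rfl⟩
      · exact ⟨hx, Or.inr hx2⟩
  rw [h, Finset.card_insert_of_notMem (by simp [hiD])]

end Aux

lemma key_gather {n f : ℕ} {S : Fin n} {D : Finset (Fin n)} {M : Type*}
    [LinearOrder M] [Inhabited M]
    (hnf : 2 * f + 1 ≤ n) (hD : D.card = f) (A : Adversary n f S D M) :
    ∀ (k : ℕ) (ζ : List (Fin n)) (v : M), IsRoute n f S ζ → ζ.length + k = f →
      ∀ i : Fin n, i ∉ ζ → i ∉ D →
      ((HonestPrimary D ζ ∧ (∀ j, j ∉ ζ → A.w ζ j = v) ∧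
          ζ.length + 2 * f ≤ n + 2 * (D.filter (· ∈ ζ)).card) ∨
        ((∀ j, j ∉ ζ → j ∉ D → A.w ζ j = v) ∧
          ζ.length + 2 * f + 1 ≤ n + 2 * (D.filter (· ∈ ζ)).card)) →
      gAux A k ζ i = v := by
  intro k
  induction k with
  | zero =>
    intro ζ v hζ hlen i hiζ hiD hyp
    have hv : A.w ζ i = v := by
      rcases hyp with ⟨_, hw, _⟩ | ⟨hw, _⟩
      · exact hw i hiζ
      · exact hw i hiζ hiD
    simp only [gAux]
    rw [hv]
    apply maj_eq_of_majority
    rw [List.count_cons_self, List.length_cons, List.length_map,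
      length_filter_finRange (p := fun j => j ∉ ζ ∧ j ≠ i),
      count_map_finRange (p := fun j => j ∉ ζ ∧ j ≠ i) (F := fun j => A.u ζ j i)]
    have hB := card_backups hζ.1
    have hDB := card_dishonest_backups (D := D) (ζ := ζ)
    have hsplit := card_split_D (D := D) (ζ := ζ)
    have hErase := card_erase_i (n := n) hiζ
    have hErase' := card_erase_i' hiζ hiD
    rcases hyp with ⟨hH, hw, hm⟩ | ⟨hw, hm⟩
    · -- honest primary: all entries equal v
      have hsub : (Finset.univ.filter fun j => j ∉ ζ ∧ j ≠ i).card
          ≤ (Finset.univ.filter fun j => (j ∉ ζ ∧ j ≠ i) ∧ A.u ζ j i = v).card := by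
        apply Finset.card_le_card
        intro x hx
        simp only [Finset.mem_filter, Finset.mem_univ, true_and] at hx ⊢
        refine ⟨hx, ?_⟩
        rw [A.A4 ζ x i hζ hx.1 hiζ hx.2.symm (Or.inr hH)]
        exact hw x hx.1
      omega
    · -- dishonest primary case
      have hsub : (Finset.univ.filter fun j => (j ∉ ζ ∧ j ≠ i) ∧ j ∉ D).card
          ≤ (Finset.univ.filter fun j => (j ∉ ζ ∧ j ≠ i) ∧ A.u ζ j i = v).card := by
        apply Finset.card_le_card
        intro x hx
        simp only [Finset.mem_filter, Finset.mem_univ, true_and] at hx ⊢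
        obtain ⟨⟨hx1, hx2⟩, hx3⟩ := hx
        refine ⟨⟨hx1, hx2⟩, ?_⟩
        rw [A.A4 ζ x i hζ hx1 hiζ hx2.symm (Or.inl hx3)]
        exact hw x hx1 hx3
      omega
  | succ k ih =>
    intro ζ v hζ hlen i hiζ hiD hyp
    have hℓ : ζ.length < f := by omega
    have hv : A.w ζ i = v := by
      rcases hyp with ⟨_, hw, _⟩ | ⟨hw, _⟩
      · exact hw i hiζ
      · exact hw i hiζ hiD
    have hchildH : ∀ j, j ∉ ζ → j ∉ D → j ≠ i →
        ζ.length + 2 * f + 1 ≤ n + 2 * (D.filter (· ∈ ζ)).card →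
        A.w ζ j = v → gAux A k (ζ ++ [j]) i = v := by
      intro j hjζ hjD hji hm hwj
      have hroute' := route_extend hζ hℓ hjζ
      have hi' : i ∉ ζ ++ [j] := by
        simp only [List.mem_append, List.mem_singleton]
        push_neg
        exact ⟨hiζ, fun h => hji (h.symm)⟩
      apply ih (ζ ++ [j]) v hroute'
        (by simp only [List.length_append, List.length_singleton]; omega) i hi' hiD
      left
      refine ⟨honest_primary_concat hjD, ?_, ?_⟩
      · intro i' hi''
        rw [A.A2 ζ j hζ hjζ hjD hroute' i' hi'']
        exact hwj
      · rw [hcard_succ_not hjD]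
        simp only [List.length_append, List.length_singleton]
        omega
    have hchildD : ∀ j, j ∉ ζ → j ∈ D → HonestPrimary D ζ →
        (∀ j', j' ∉ ζ → A.w ζ j' = v) →
        ζ.length + 2 * f ≤ n + 2 * (D.filter (· ∈ ζ)).card →
        gAux A k (ζ ++ [j]) i = v := by
      intro j hjζ hjD hH hw hm
      have hroute' := route_extend hζ hℓ hjζ
      have hji : i ≠ j := fun h => hiD (h ▸ hjD)
      have hi' : i ∉ ζ ++ [j] := by
        simp only [List.mem_append, List.mem_singleton]
        push_neg
        exact ⟨hiζ, hji⟩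
      apply ih (ζ ++ [j]) v hroute'
        (by simp only [List.length_append, List.length_singleton]; omega) i hi' hiD
      right
      refine ⟨?_, ?_⟩
      · intro i' hi'' hi'D
        rw [A.A3 ζ j hζ hH hjζ hjD hroute' i' hi'' hi'D]
        exact hw j hjζ
      · rw [hcard_succ_mem hjD hjζ]
        simp only [List.length_append, List.length_singleton]
        omega
    simp only [gAux]
    apply maj_eq_of_majority
    rw [List.length_map, length_filter_finRange (p := fun j => j ∉ ζ),
      count_map_finRange (p := fun j => j ∉ ζ)
        (F := fun j => if j = i then A.w ζ i else gAux A k (ζ ++ [j]) i)]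
    have hB := card_backups hζ.1
    have hDB := card_dishonest_backups (D := D) (ζ := ζ)
    have hsplit := card_split_D (D := D) (ζ := ζ)
    rcases hyp with ⟨hH, hw, hm⟩ | ⟨hw, hm⟩
    · by_cases hms : ζ.length + 2 * f + 1 ≤ n + 2 * (D.filter (· ∈ ζ)).card
      · -- strict majority: all backups contribute v
        have hsub : (Finset.univ.filter fun j => (j : Fin n) ∉ ζ).card
            ≤ (Finset.univ.filter fun j => j ∉ ζ ∧
                (if j = i then A.w ζ i else gAux A k (ζ ++ [j]) i) = v).card := by
          apply Finset.card_le_card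
          intro x hx
          simp only [Finset.mem_filter, Finset.mem_univ, true_and] at hx ⊢
          refine ⟨hx, ?_⟩
          by_cases hxi : x = i
          · rw [if_pos hxi]; exact hv
          · rw [if_neg hxi]
            by_cases hxD : x ∈ D
            · exact hchildD x hx hxD hH hw hm
            · exact hchildH x hx hxD hxi hms (hw x hx)
        omega
      · -- tie case: i together with the dishonest backups is a strict majority
        have hins := card_insert_i hiζ hiD
        have hsub : (Finset.univ.filter fun j => j ∉ ζ ∧ (j = i ∨ j ∈ D)).card
            ≤ (Finset.univ.filter fun j => j ∉ ζ ∧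
                (if j = i then A.w ζ i else gAux A k (ζ ++ [j]) i) = v).card := by
          apply Finset.card_le_card
          intro x hx
          simp only [Finset.mem_filter, Finset.mem_univ, true_and] at hx ⊢
          obtain ⟨hx1, hx2⟩ := hx
          refine ⟨hx1, ?_⟩
          rcases hx2 with rfl | hxD
          · rw [if_pos rfl]; exact hv
          · have hxi : x ≠ i := fun h => hiD (h ▸ hxD)
            rw [if_neg hxi]
            exact hchildD x hx1 hxD hH hw hm
        omega
    · -- dishonest primary case: honest backups form strict majority
      have hsub : (Finset.univ.filter fun j => j ∉ ζ ∧ j ∉ D).card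
          ≤ (Finset.univ.filter fun j => j ∉ ζ ∧
              (if j = i then A.w ζ i else gAux A k (ζ ++ [j]) i) = v).card := by
        apply Finset.card_le_card
        intro x hx
        simp only [Finset.mem_filter, Finset.mem_univ, true_and] at hx ⊢
        obtain ⟨hx1, hx2⟩ := hx
        refine ⟨hx1, ?_⟩
        by_cases hxi : x = i
        · rw [if_pos hxi]; exact hv
        · rw [if_neg hxi]
          exact hchildH x hx1 hx2 hxi hm (hw x hx1 hx2)
      omega


/-- **Lemma 3 (safe node consensus).** Assume `n ≥ 2f + 1` and the set `D` of
dishonest players has exactly `f` elements.  Let `ζ` be a route of depth `d`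
(`1 ≤ d ≤ f`) whose primary is honest and whose first `d − 1` entries are all
dishonest (a safe node: the primary is the first honest player appearing on the
route).  Then for every adversary assignment `(w, u)` satisfying (A1)–(A4) and every
honest backup `i` of `ζ`, the gathering value satisfies `g(ζ, i) = w(ζ, i)`; in
particular all honest backups of `ζ` reach consensus on the common multicast value
of `ζ`'s honest primary. -/
theorem lemma3_safe_node_consensus
    {n f : ℕ} {S : Fin n} {D : Finset (Fin n)} {M : Type*} [LinearOrder M] [Inhabited M]
    (hn : 2 ≤ n) (hf : 1 ≤ f) (hnf : 2 * f + 1 ≤ n) (hD : D.card = f)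
    (A : Adversary n f S D M) (ζ : List (Fin n))
    (hζ : IsRoute n f S ζ) (hprim : HonestPrimary D ζ)
    (hpre : ∀ q ∈ ζ.dropLast, q ∈ D)
    (i : Fin n) (hi : i ∉ ζ) (hiH : i ∉ D) :
    g A ζ i = A.w ζ i := by
  classical
  have hℓ1 : 1 ≤ ζ.length := hζ.2.2.1
  have hℓf : ζ.length ≤ f := hζ.2.2.2
  have hdrop : ζ.dropLast.toFinset ⊆ D.filter (· ∈ ζ) := by
    intro q hq
    rw [List.mem_toFinset] at hq
    exact Finset.mem_filter.mpr ⟨hpre q hq, (List.dropLast_sublist ζ).subset hq⟩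
  have hcard : ζ.length ≤ (D.filter (· ∈ ζ)).card + 1 := by
    have h1 : ζ.dropLast.toFinset.card = ζ.length - 1 := by
      rw [List.toFinset_card_of_nodup ((List.dropLast_sublist ζ).nodup hζ.1),
        List.length_dropLast]
    have h2 := Finset.card_le_card hdrop
    omega
  have h := key_gather hnf hD A (f - ζ.length) ζ (A.w ζ i) hζ (by omega) i hi hiH
    (Or.inl ⟨hprim, fun j hj => A.A1 ζ hζ hprim j i hj hi, by omega⟩)
  exact h

end QBA
end

section
/- (Bottom layer with honest primary.) Let ζ be a route of depth f whose primary is honest. Then for every adversary assignment (w, u) satisfying (A1)-(A4) and every honest backup i of ζ, every element of i's bottom gathering list (namely w(ζ, i) and u(ζ, j, i) for every backup j ≠ i) equals the common multicast value w(ζ, i); consequently g(ζ, i) = w(ζ, i), and all honest backups of ζ obtain the same gathering value. -/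
namespace QBA

lemma maj_const {M : Type*} [LinearOrder M] (d m : M) (L : List M)
    (hne : L ≠ []) (hall : ∀ x ∈ L, x = m) : maj d L = m := by
  have hmem : m ∈ L := by
    cases L with
    | nil => exact absurd rfl hne
    | cons a l => exact (hall a (by simp)) ▸ (List.mem_cons_self : a ∈ a :: l)
  have hts : L.toFinset = {m} := by
    ext x
    simp only [List.mem_toFinset, Finset.mem_singleton]
    exact ⟨fun hx => hall x hx, fun hx => hx ▸ hmem⟩
  unfold maj
  rw [hts]
  have : ({m} : Finset M).filter (fun x => ∀ m' ∈ ({m} : Finset M),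
      L.count m' ≤ L.count x) = {m} := by
    apply Finset.filter_true_of_mem
    intro x hx m' hm'
    simp only [Finset.mem_singleton] at hx hm'
    subst hx; subst hm'; exact le_refl _
  simp only [this]
  rw [dif_pos ⟨m, Finset.mem_singleton_self m⟩]
  exact Finset.min'_singleton m

/-- **Bottom layer with honest primary.** Let `ζ` be a route of depth `f` whose
primary is honest.  Then for every adversary assignment `(w, u)` satisfying
(A1)–(A4) and every honest backup `i` of `ζ`, every element of `i`'s bottom gathering
list (namely `w(ζ, i)` and `u(ζ, j, i)` for every backup `j ≠ i`) equals the common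
multicast value `w(ζ, i)`; consequently `g(ζ, i) = w(ζ, i)`, and all honest backups
of `ζ` obtain the same gathering value. -/
theorem bottom_layer_honest_primary
    {n f : ℕ} {S : Fin n} {D : Finset (Fin n)} {M : Type*} [LinearOrder M] [Inhabited M]
    (A : Adversary n f S D M) (ζ : List (Fin n))
    (hζ : IsRoute n f S ζ) (hlen : ζ.length = f) (hprim : HonestPrimary D ζ)
    (i : Fin n) (hi : i ∉ ζ) (hiH : i ∉ D) :
    (∀ j : Fin n, j ∉ ζ → j ≠ i → A.u ζ j i = A.w ζ i) ∧
    g A ζ i = A.w ζ i ∧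
    (∀ i' : Fin n, i' ∉ ζ → i' ∉ D → g A ζ i' = g A ζ i) := by
  have key : ∀ i : Fin n, i ∉ ζ → i ∉ D →
      (∀ j : Fin n, j ∉ ζ → j ≠ i → A.u ζ j i = A.w ζ i) ∧ g A ζ i = A.w ζ i := by
    intro i hi hiH
    have hu : ∀ j : Fin n, j ∉ ζ → j ≠ i → A.u ζ j i = A.w ζ i := by
      intro j hj hji
      have h4 := A.A4 ζ j i hζ hj hi (Ne.symm hji) (Or.inr hprim)
      rw [h4]
      exact A.A1 ζ hζ hprim j i hj hi
    refine ⟨hu, ?_⟩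
    have hg : g A ζ i = gAux A 0 ζ i := by
      unfold g; rw [hlen, Nat.sub_self]
    rw [hg]
    show maj default (A.w ζ i ::
        (((List.finRange n).filter fun j => decide (j ∉ ζ ∧ j ≠ i)).map
          fun j => A.u ζ j i)) = A.w ζ i
    apply maj_const
    · simp
    · intro x hx
      rcases List.mem_cons.1 hx with h | h
      · exact h
      · obtain ⟨j, hj, rfl⟩ := List.mem_map.1 h
        have hj' := List.mem_filter.1 hj
        have hjp : j ∉ ζ ∧ j ≠ i := of_decide_eq_true hj'.2
        exact hu j hjp.1 hjp.2
  obtain ⟨hu, hgi⟩ := key i hi hiH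
  refine ⟨hu, hgi, ?_⟩
  intro i' hi' hiH'
  obtain ⟨_, hgi'⟩ := key i' hi' hiH'
  rw [hgi, hgi']
  exact A.A1 ζ hζ hprim i' i hi' hi

end QBA
end
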